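/- Let α > 0 and μ > μ_P(α) = (2/α)√(1+α), and let θ_1 = arctan(½(μα − √(μ²α² − 4(1+α)))), φ_1⁺ = √(1/sin θ_1). Consider the planar vector field V(θ,φ) = (p_+(θ)·φ, −c_+(θ)·b(θ,φ)) with p_+(θ) = 1 + α cos²θ − μα sin θ cos θ, b(θ,φ) = −1 + φ² sin θ, c_+(θ) = −α(cos θ − μ sin θ). Then (θ_1, φ_1⁺) is a zero of V, the derivative (Jacobian matrix) of V at (θ_1, φ_1⁺) equals the lower-triangular matrix with diagonal entries λ_1 = p_+'(θ_1)·φ_1⁺ and λ_2 = −2 tan(θ_1)·φ_1⁺ and lower-left entry −(φ_1⁺)², and both eigenvalues λ_1 and λ_2 are strictly negative (so the point is a stable node). -/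

import Mathlib

set_option maxHeartbeats 1000000


open Real

/-- For `α > 0`, `μ > μ_P(α)`, the point `P = (θ₁, φ₁⁺)` is a zero of the
vector field `V(θ,φ) = (p₊(θ)φ, −c₊(θ)b(θ,φ))`, the Jacobian of `V` at `P` is the
lower-triangular matrix with diagonal `λ₁ = p₊'(θ₁)φ₁⁺`, `λ₂ = −2 tan(θ₁)φ₁⁺` and
lower-left entry `−(φ₁⁺)²`, and both eigenvalues `λ₁, λ₂` are strictly negative. -/
theorem painleve_P_stable_node (α μ : ℝ) (hα : 0 < α)
    (hμP : 2 / α * Real.sqrt (1 + α) < μ) :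
    let pplus : ℝ → ℝ := fun θ => 1 + α * Real.cos θ ^ 2 - μ * α * Real.sin θ * Real.cos θ
    let b : ℝ → ℝ → ℝ := fun θ φ => -1 + φ ^ 2 * Real.sin θ
    let cplus : ℝ → ℝ := fun θ => -α * (Real.cos θ - μ * Real.sin θ)
    let θ₁ : ℝ := Real.arctan ((μ * α - Real.sqrt (μ ^ 2 * α ^ 2 - 4 * (1 + α))) / 2)
    let φ₁ : ℝ := Real.sqrt (1 / Real.sin θ₁)
    let V : ℝ × ℝ → ℝ × ℝ := fun p => (pplus p.1 * p.2, -(cplus p.1 * b p.1 p.2))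
    let lam₁ : ℝ := deriv pplus θ₁ * φ₁
    let lam₂ : ℝ := -2 * Real.tan θ₁ * φ₁
    V (θ₁, φ₁) = (0, 0) ∧
    DifferentiableAt ℝ V (θ₁, φ₁) ∧
    (∀ x y : ℝ, fderiv ℝ V (θ₁, φ₁) (x, y) = (lam₁ * x, -φ₁ ^ 2 * x + lam₂ * y)) ∧
    lam₁ < 0 ∧ lam₂ < 0 := by
  intro pplus b cplus θ₁ φ₁ V lam₁ lam₂
  have h1α : (0:ℝ) ≤ 1 + α := by linarith
  have hsq1α : Real.sqrt (1 + α) ^ 2 = 1 + α := Real.sq_sqrt h1α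
  have hsnn : (0:ℝ) ≤ Real.sqrt (1 + α) := Real.sqrt_nonneg _
  have hμα : 2 * Real.sqrt (1 + α) < μ * α := by
    rw [div_mul_eq_mul_div, div_lt_iff₀ hα] at hμP
    linarith
  have hD : 0 < μ ^ 2 * α ^ 2 - 4 * (1 + α) := by nlinarith
  set r := Real.sqrt (μ ^ 2 * α ^ 2 - 4 * (1 + α)) with hrdef
  have hr2 : r ^ 2 = μ ^ 2 * α ^ 2 - 4 * (1 + α) := Real.sq_sqrt hD.le
  have hr0 : 0 < r := Real.sqrt_pos.mpr hD
  have hμα0 : 0 < μ * α := by nlinarith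
  have hrlt : r < μ * α := by nlinarith
  set t := (μ * α - r) / 2 with htdef
  have ht0 : 0 < t := by rw [htdef]; linarith
  have hθ : θ₁ = Real.arctan t := rfl
  have htan : Real.tan θ₁ = t := by rw [hθ, Real.tan_arctan]
  have hc0 : 0 < Real.cos θ₁ := by rw [hθ]; exact Real.cos_arctan_pos t
  have hsc : Real.sin θ₁ = t * Real.cos θ₁ := by
    have h := Real.tan_eq_sin_div_cos θ₁
    rw [htan] at h
    field_simp at h
    linarith
  have hs0 : 0 < Real.sin θ₁ := by rw [hsc]; positivity
  have hpyth := Real.sin_sq_add_cos_sq θ₁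
  have hone : Real.cos θ₁ ^ 2 * (1 + t ^ 2) = 1 := by nlinarith [hsc, hpyth]
  have hquad : t ^ 2 - μ * α * t + (1 + α) = 0 := by
    rw [htdef]; linear_combination hr2 / 4
  have hp0' : 1 + α * Real.cos θ₁ ^ 2 - μ * α * Real.sin θ₁ * Real.cos θ₁ = 0 := by
    rw [hsc]; linear_combination (-1) * hone + Real.cos θ₁ ^ 2 * hquad
  have hp0 : pplus θ₁ = 0 := hp0'
  have hφ0 : 0 < φ₁ := Real.sqrt_pos.mpr (by positivity)
  have hφ2 : φ₁ ^ 2 = 1 / Real.sin θ₁ := Real.sq_sqrt (by positivity)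
  have hb0 : b θ₁ φ₁ = 0 := by
    show -1 + φ₁ ^ 2 * Real.sin θ₁ = 0
    rw [hφ2]; field_simp; norm_num
  have hcc : cplus θ₁ * Real.cos θ₁ = 1 := by
    show -α * (Real.cos θ₁ - μ * Real.sin θ₁) * Real.cos θ₁ = 1
    linear_combination (-1) * hp0'
  have hcs : cplus θ₁ * Real.sin θ₁ = t := by
    show -α * (Real.cos θ₁ - μ * Real.sin θ₁) * Real.sin θ₁ = t
    rw [hsc]
    have h : -α * (Real.cos θ₁ - μ * (t * Real.cos θ₁)) * Real.cos θ₁ = 1 := by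
      rw [← hsc]; exact hcc
    linear_combination t * h
  -- derivative of pplus
  have hder_eq : α * ((2:ℕ) * Real.cos θ₁ ^ 1 * (-Real.sin θ₁)) -
      (μ * α * Real.cos θ₁ * Real.cos θ₁ + μ * α * Real.sin θ₁ * (-Real.sin θ₁)) =
      2 * t - μ * α := by
    rw [hsc]; push_cast
    linear_combination (2 * t - μ * α) * hone + (-2 * t * Real.cos θ₁ ^ 2) * hquad
  have hdp : HasDerivAt pplus (2 * t - μ * α) θ₁ := by
    have h := ((((Real.hasDerivAt_cos θ₁).pow 2).const_mul α).const_add 1).sub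
      (((Real.hasDerivAt_sin θ₁).const_mul (μ * α)).mul (Real.hasDerivAt_cos θ₁))
    refine h.congr_deriv ?_
    rw [hsc]; push_cast
    linear_combination (2 * t - μ * α) * hone + (-2 * t * Real.cos θ₁ ^ 2) * hquad
  have hlam1 : lam₁ = (2 * t - μ * α) * φ₁ := by
    show deriv pplus θ₁ * φ₁ = _
    rw [hdp.deriv]
  have h2t : 2 * t - μ * α = -r := by rw [htdef]; ring
  have hlam1neg : lam₁ < 0 := by
    rw [hlam1, h2t]; nlinarith [mul_pos hr0 hφ0]
  have hlam2val : lam₂ = -2 * t * φ₁ := by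
    show -2 * Real.tan θ₁ * φ₁ = _
    rw [htan]
  have hlam2neg : lam₂ < 0 := by
    rw [hlam2val]; nlinarith [mul_pos ht0 hφ0]
  -- derivative of cplus
  have hdc : HasDerivAt cplus (-α * (-Real.sin θ₁ - μ * Real.cos θ₁)) θ₁ :=
    ((Real.hasDerivAt_cos θ₁).sub ((Real.hasDerivAt_sin θ₁).const_mul μ)).const_mul (-α)
  -- fderiv machinery
  have hfst : HasFDerivAt (fun p : ℝ × ℝ => p.1) (ContinuousLinearMap.fst ℝ ℝ ℝ) (θ₁, φ₁) :=
    hasFDerivAt_fst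
  have hsnd : HasFDerivAt (fun p : ℝ × ℝ => p.2) (ContinuousLinearMap.snd ℝ ℝ ℝ) (θ₁, φ₁) :=
    hasFDerivAt_snd
  have hP1 : HasFDerivAt (fun p : ℝ × ℝ => pplus p.1)
      ((2 * t - μ * α) • ContinuousLinearMap.fst ℝ ℝ ℝ) (θ₁, φ₁) :=
    by have := hdp.comp_hasFDerivAt (θ₁, φ₁) hfst; exact this
  have hcomp1 := hP1.mul hsnd
  have hC : HasFDerivAt (fun p : ℝ × ℝ => cplus p.1)
      ((-α * (-Real.sin θ₁ - μ * Real.cos θ₁)) • ContinuousLinearMap.fst ℝ ℝ ℝ) (θ₁, φ₁) :=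
    by have := hdc.comp_hasFDerivAt (θ₁, φ₁) hfst; exact this
  have hSin : HasFDerivAt (fun p : ℝ × ℝ => Real.sin p.1)
      (Real.cos θ₁ • ContinuousLinearMap.fst ℝ ℝ ℝ) (θ₁, φ₁) :=
    by have := (Real.hasDerivAt_sin θ₁).comp_hasFDerivAt (θ₁, φ₁) hfst; exact this
  have hSq : HasFDerivAt (fun p : ℝ × ℝ => p.2 ^ 2)
      (((2:ℕ) * φ₁ ^ 1) • ContinuousLinearMap.snd ℝ ℝ ℝ) (θ₁, φ₁) :=
    by have := (hasDerivAt_pow 2 φ₁).comp_hasFDerivAt (θ₁, φ₁) hsnd; exact this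
  have hbF : HasFDerivAt (fun p : ℝ × ℝ => b p.1 p.2) _ (θ₁, φ₁) :=
    (hSq.mul hSin).const_add (-1)
  have hcomp2 := (hC.mul hbF).neg
  have hV : HasFDerivAt V _ (θ₁, φ₁) := HasFDerivAt.prodMk hcomp1 hcomp2
  refine ⟨?_, hV.differentiableAt, ?_, hlam1neg, hlam2neg⟩
  · show (pplus θ₁ * φ₁, -(cplus θ₁ * b θ₁ φ₁)) = (0, 0)
    rw [hp0, hb0]; simp
  · intro x y
    rw [hV.fderiv]
    simp only [ContinuousLinearMap.prod_apply, ContinuousLinearMap.add_apply,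
      ContinuousLinearMap.smul_apply, ContinuousLinearMap.coe_fst', ContinuousLinearMap.coe_snd',
      ContinuousLinearMap.neg_apply, smul_eq_mul]
    refine Prod.ext ?_ ?_
    · simp only []
      rw [hlam1]
      have : pplus (θ₁, φ₁).1 = 0 := hp0
      rw [this]; ring
    · simp only []
      rw [hlam2val]
      have hb00 : b (θ₁, φ₁).1 (θ₁, φ₁).2 = 0 := hb0
      rw [hb00]
      have h1 : cplus (θ₁, φ₁).1 * Real.cos θ₁ = 1 := hcc
      have h2 : cplus (θ₁, φ₁).1 * Real.sin θ₁ = t := hcs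
      push_cast
      linear_combination (-(φ₁ ^ 2 * x)) * h1 + (-2 * φ₁ * y) * h2
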